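/- arXiv:2303.08037 — 2 statements merged into one kernel-verified Lean document; each statement's English description precedes it below -/
import Mathlib

section
/- For the eigenvalue combination λ₁ = 1 + 9iω, λ₂ = 1 + 19iω, λ₃ = λ₄ = iω with ω ≠ 0 real, the cubic λ₁ z³ − λ₂ z² + 5λ₃ z + λ₄ = 0 has at least one root z with |z| ≠ 1; hence the fourth-order Adams–Moulton scheme does not conserve kinetic energy under a constant magnetic field. -/
open Complex Polynomial

/-- For `λ₁ = 1 + 9iω`, `λ₂ = 1 + 19iω`, `λ₃ = λ₄ = iω` with real `ω ≠ 0`,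
the cubic `λ₁ z³ - λ₂ z² + 5 λ₃ z + λ₄ = 0` has at least one root of modulus
different from `1`; hence the fourth-order Adams–Moulton scheme does not
conserve kinetic energy under a constant magnetic field. -/
theorem adams_moulton_root_off_unit_circle (ω : ℝ) (hω : ω ≠ 0) :
    ∃ z : ℂ, (1 + 9 * I * ω) * z ^ 3 - (1 + 19 * I * ω) * z ^ 2
        + 5 * (I * ω) * z + I * ω = 0 ∧ ‖z‖ ≠ 1 := by
  set l1 : ℂ := 1 + 9 * I * ω with hl1def
  have hl1 : l1 ≠ 0 := by
    intro h
    have h1 : l1.re = 0 := by rw [h]; simp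
    simp [hl1def, Complex.add_re, Complex.mul_re] at h1
  set a : ℂ := -(1 + 19 * I * ω) / l1
  set b : ℂ := 5 * (I * ω) / l1
  set c : ℂ := (I * ω) / l1
  set p : Polynomial ℂ := X ^ 3 + C a * X ^ 2 + C b * X + C c with hp
  have hmonic : p.Monic := by
    unfold p; monicity!
  have hdeg : p.natDegree = 3 := by
    unfold p; compute_degree!
  have hcoeff0 : p.coeff 0 = c := by
    simp [hp]
  have hprod : p.coeff 0 = (-1) ^ p.natDegree * p.roots.prod :=
    (IsAlgClosed.splits p).coeff_zero_eq_prod_roots_of_monic hmonic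
  have habsprod : ‖p.roots.prod‖ = ‖c‖ := by
    rw [hcoeff0, hdeg] at hprod
    have h4 : p.roots.prod = -c := by linear_combination hprod
    rw [h4, norm_neg]
  have habsc : ‖c‖ < 1 := by
    have h2 : ‖I * (ω:ℂ)‖ ^ 2 < ‖l1‖ ^ 2 := by
      rw [Complex.sq_norm, Complex.sq_norm]
      simp [Complex.normSq_apply, hl1def, Complex.mul_re, Complex.mul_im]
      nlinarith [sq_nonneg ω]
    have h1 : ‖I * (ω:ℂ)‖ < ‖l1‖ :=
      lt_of_pow_lt_pow_left₀ 2 (norm_nonneg _) h2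
    have hpos : 0 < ‖l1‖ := by
      simpa [norm_pos_iff] using hl1
    rw [show c = I * ω / l1 from rfl, norm_div, div_lt_one hpos]
    exact h1
  have hex : ∃ z ∈ p.roots, ‖z‖ ≠ 1 := by
    by_contra h
    push_neg at h
    have : (p.roots.map (normHom : ℂ →*₀ ℝ)).prod = 1 := by
      rw [Multiset.prod_eq_one]
      intro x hx
      obtain ⟨z, hz, rfl⟩ := Multiset.mem_map.mp hx
      exact h z hz
    rw [← map_multiset_prod (normHom : ℂ →*₀ ℝ), normHom_apply] at this
    rw [habsprod] at this
    exact absurd this (ne_of_lt habsc)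
  obtain ⟨z, hz, hzabs⟩ := hex
  refine ⟨z, ?_, hzabs⟩
  have heval : p.eval z = 0 := by
    have := isRoot_of_mem_roots hz
    exact this
  have heval' : z ^ 3 + a * z ^ 2 + b * z + c = 0 := by
    simpa [hp] using heval
  have := congrArg (fun w => l1 * w) heval'
  simp only [mul_zero] at this
  rw [show (1 + 19 * I * (ω:ℂ)) = -(a * l1) by simp only [a, div_mul_cancel₀ _ hl1, neg_neg],
      show 5 * (I * (ω:ℂ)) = b * l1 by simp only [b, div_mul_cancel₀ _ hl1],
      show I * (ω:ℂ) = c * l1 by simp only [c, div_mul_cancel₀ _ hl1]]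
  linear_combination this
end

section
/- Let J be the rotation generator J = [[0,1,0],[−1,0,0],[0,0,0]] and ω ≠ 0 real. The linear three-step recurrence (I + 9ωJ̃)u^{n+1} = (I − 19ωJ̃)u^n − 5ωJ̃ u^{n−1} + ωJ̃ u^{n−2} (with J̃ = −J, matching the Adams–Moulton 4 update under B = ẑ) admits a solution sequence with ‖u^n‖ strictly increasing; equivalently, its companion matrix has spectral radius > 1 for some ω > 0. -/
open Complex Polynomial

private lemma prod_lb (w : ℂ) (c : ℝ) (hc : 0 ≤ c) :
    ∀ s : Multiset ℂ, (∀ z ∈ s, c ≤ ‖w - z‖) →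
      c ^ Multiset.card s ≤ (s.map fun z => ‖w - z‖).prod := by
  intro s
  induction s using Multiset.induction_on with
  | empty => simp
  | cons a s ih =>
    intro h
    simp only [Multiset.map_cons, Multiset.prod_cons, Multiset.card_cons, pow_succ]
    rw [mul_comm]
    exact mul_le_mul (h a (Multiset.mem_cons_self a s))
      (ih fun z hz => h z (Multiset.mem_cons_of_mem hz))
      (pow_nonneg hc _) (norm_nonneg _)

private lemma exists_big_root :
    ∃ z : ℂ, (1 + 9*I)*z^3 - (1 - 19*I)*z^2 + 5*I*z - I = 0 ∧ 1 < ‖z‖ := by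
  by_contra hcon
  push_neg at hcon
  set P : ℂ[X] := C (1+9*I) * X^3 - C (1-19*I) * X^2 + C (5*I) * X - C I with hP
  have hlc : (1+9*I : ℂ) ≠ 0 := by
    intro h
    have := congrArg Complex.im h
    simp at this
  have hdeg : P.natDegree = 3 := by
    unfold P; compute_degree!
  have hsp : P.Splits := IsAlgClosed.splits P
  have hfact : P = C P.leadingCoeff * (P.roots.map fun a => X - C a).prod :=
    hsp.eq_prod_roots
  have hcard : Multiset.card P.roots = 3 := by
    have h := hsp.natDegree_eq_card_roots
    omega
  have hlead : P.leadingCoeff = 1 + 9*I := by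
    rw [Polynomial.leadingCoeff, hdeg, hP]
    simp only [coeff_sub, coeff_add, coeff_C_mul, coeff_X_pow, Polynomial.coeff_X, coeff_C]
    norm_num
  have hroots : ∀ z ∈ P.roots, ‖z‖ ≤ 1 := by
    intro z hz
    have hz0 : P.eval z = 0 := by
      have := Polynomial.isRoot_of_mem_roots hz
      exact this
    apply hcon
    simpa [hP] using hz0
  -- the test point
  set w : ℂ := ((-4146579/2400500 : ℝ) : ℂ) + ((-231693/600125 : ℝ) : ℂ) * I with hw
  have habsw : ‖w‖ = 177/100 := by
    rw [hw, Complex.norm_add_mul_I]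
    rw [show ((-4146579/2400500:ℝ))^2 + ((-231693/600125:ℝ))^2 = (177/100)^2 by norm_num]
    exact Real.sqrt_sq (by norm_num)
  have hlb : ∀ z ∈ P.roots, (77/100 : ℝ) ≤ ‖w - z‖ := by
    intro z hz
    have h1 : ‖z‖ ≤ 1 := hroots z hz
    have h2 : ‖w‖ - ‖z‖ ≤ ‖w - z‖ := by
      simpa using norm_sub_norm_le w z
    rw [habsw] at h2
    linarith
  have hkey : Real.sqrt 82 * (77/100:ℝ)^3 ≤ ‖P.eval w‖ := by
    conv_rhs => rw [hfact]
    rw [eval_mul, eval_C, eval_multiset_prod, norm_mul, Multiset.map_map]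
    have h1 : ‖P.leadingCoeff‖ = Real.sqrt 82 := by
      rw [hlead, show (1 + 9*I : ℂ) = ((1:ℝ):ℂ) + ((9:ℝ):ℂ)*I by norm_num,
        Complex.norm_add_mul_I]
      norm_num
    rw [h1]
    have h2 := prod_lb w (77/100) (by norm_num) P.roots hlb
    rw [hcard] at h2
    have h3 : ‖(Multiset.map (eval w ∘ fun a => X - C a) P.roots).prod‖
        = (Multiset.map (fun z => ‖w - z‖) P.roots).prod := by
      rw [show ‖(Multiset.map (eval w ∘ fun a => X - C a) P.roots).prod‖
          = normHom (Multiset.map (eval w ∘ fun a => X - C a) P.roots).prod from rfl,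
        map_multiset_prod, Multiset.map_map]
      congr 1
      apply Multiset.map_congr rfl
      intro x _
      simp
    rw [h3]
    exact mul_le_mul_of_nonneg_left h2 (Real.sqrt_nonneg _)
  have hEval : P.eval w = ((-589624802808146259/13832641800125000000 : ℝ) : ℂ)
      + ((768161110005186013/13832641800125000000 : ℝ) : ℂ) * I := by
    rw [hP]
    simp only [eval_sub, eval_add, eval_mul, eval_C, eval_pow, eval_X, hw]
    push_cast
    linear_combination ((-5599081008574276839/691632090006250000 : ℂ)
      + (-722285530329016269/172908022501562500 : ℂ) * I
      + (-111938954979326013/216135028126953125 : ℂ) * I^2) * Complex.I_sq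
  have habsE : ‖P.eval w‖ < Real.sqrt 82 * (77/100:ℝ)^3 := by
    rw [hEval, Complex.norm_add_mul_I]
    have h82 : Real.sqrt 82 * (77/100:ℝ)^3 = Real.sqrt (82 * ((77/100:ℝ)^3)^2) := by
      rw [Real.sqrt_mul (by norm_num), Real.sqrt_sq (by positivity)]
    rw [h82]
    apply Real.sqrt_lt_sqrt (by positivity)
    norm_num
  linarith


/-- The complexified scalar Adams–Moulton 4 recurrence under a constant
`ẑ`-directed magnetic field, `(1 + 9iω) u^{n+3} = (1 - 19iω) u^{n+2} - 5iω u^{n+1} + iω u^n`,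
admits (for some `ω > 0`) a solution sequence whose modulus is strictly
increasing; equivalently, the companion matrix has spectral radius `> 1`. -/
theorem adams_moulton_spurious_heating :
    ∃ ω : ℝ, 0 < ω ∧
      (∃ u : ℕ → ℂ, (∀ n, (1 + 9 * I * ω) * u (n + 3) =
          (1 - 19 * I * ω) * u (n + 2) - 5 * (I * ω) * u (n + 1) + I * ω * u n) ∧
        StrictMono fun n => ‖u n‖) ∧
      ∃ z : ℂ, (1 + 9 * I * ω) * z ^ 3 - (1 - 19 * I * ω) * z ^ 2
          + 5 * (I * ω) * z - I * ω = 0 ∧ 1 < ‖z‖ := by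

  obtain ⟨z, hz, hz1⟩ := exists_big_root
  refine ⟨1, one_pos, ⟨fun n => z ^ n, fun n => ?_, ?_⟩, z, ?_, hz1⟩
  · push_cast
    linear_combination z ^ n * hz
  · intro a b hab
    simp only [norm_pow]
    exact pow_lt_pow_right₀ hz1 hab
  · push_cast
    linear_combination hz
end
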